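/- Let H ≥ 1 be an integer and define α_t = (H+1)/(H+t) for integers t ≥ 1, and for 1 ≤ i ≤ τ set α_τ^i := α_i · ∏_{j=i+1}^{τ} (1 − α_j). Then for every integer i ≥ 1, the series Σ_{τ=i}^{∞} α_τ^i converges and Σ_{τ=i}^{∞} α_τ^i = 1 + 1/H. -/

import Mathlib

open Finset Filter

/-- Property 3 (second part) of the step-size weights of Jin et al. (2018):
for every `i ≥ 1`, the series `Σ_{τ=i}^∞ α_τ^i` converges to `1 + 1/H`. -/
theorem stepsize_weights_tail_sum
    (H : ℕ) (hH : 1 ≤ H)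
    (α : ℕ → ℝ) (hα : ∀ t, α t = ((H : ℝ) + 1) / ((H : ℝ) + t))
    (w : ℕ → ℕ → ℝ)
    (hw : ∀ τ i, w τ i = α i * ∏ j ∈ Icc (i + 1) τ, (1 - α j)) :
    ∀ i : ℕ, 1 ≤ i →
      HasSum (fun n : ℕ => w (i + n) i) (1 + 1 / (H : ℝ)) := by
  intro i hi
  have hH0 : (0:ℝ) < H := by exact_mod_cast hH
  have hi0 : (0:ℝ) < i := by exact_mod_cast hi
  set P : ℕ → ℝ := fun n => ∏ j ∈ Icc (i + 1) (i + n), (1 - α j) with hPdef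
  have hfac : ∀ j : ℕ, 1 ≤ j → 1 - α j = ((j:ℝ) - 1) / ((H:ℝ) + j) := by
    intro j hj
    have hden : (0:ℝ) < (H:ℝ) + j := by positivity
    rw [hα]; field_simp; ring
  have hfacnn : ∀ j : ℕ, 1 ≤ j → 0 ≤ 1 - α j := by
    intro j hj
    rw [hfac j hj]
    have h1 : (1:ℝ) ≤ (j:ℝ) := by exact_mod_cast hj
    have : (0:ℝ) < (H:ℝ) + j := by positivity
    apply div_nonneg (by linarith) this.le
  have hP0 : P 0 = 1 := by
    simp [hPdef]
  have hPrec : ∀ n, P (n+1) = P n * (((i:ℝ) + n) / ((H:ℝ) + i + n + 1)) := by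
    intro n
    have hle : i + 1 ≤ i + n + 1 := by omega
    have : P (n+1) = P n * (1 - α (i + n + 1)) := by
      simp only [hPdef]
      rw [show i + (n+1) = i + n + 1 from rfl, Finset.prod_Icc_succ_top hle]
    rw [this, hfac (i+n+1) (by omega)]
    push_cast
    ring_nf
  have hPnn : ∀ n, 0 ≤ P n := by
    intro n
    apply Finset.prod_nonneg
    intro j hj
    exact hfacnn j (by have := (Finset.mem_Icc.mp hj).1; omega)
  -- R n := (H+i+n) * P n
  -- partial sum formula
  have hsum : ∀ N, ∑ n ∈ range N, P n = (((H:ℝ) + i) - ((H:ℝ) + i + N) * P N) / H := by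
    intro N
    induction N with
    | zero => simp [hP0]
    | succ N ih =>
      rw [Finset.sum_range_succ, ih, hPrec N]
      have hden : ((H:ℝ) + i + N + 1) ≠ 0 := by positivity
      field_simp
      push_cast
      ring
  -- bound on R n
  have hRbound : ∀ n, ((H:ℝ) + i + n) * P n ≤ ((H:ℝ) + i) * i / ((i:ℝ) + n) := by
    intro n
    induction n with
    | zero =>
      rw [hP0]
      push_cast
      rw [add_zero, add_zero, mul_one, mul_div_assoc, div_self hi0.ne', mul_one]
    | succ n ih =>
      push_cast
      have h1 : (0:ℝ) < (i:ℝ) + n := by positivity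
      have h2 : (0:ℝ) < (H:ℝ) + i + n + 1 := by positivity
      have h3 : (0:ℝ) < (i:ℝ) + n + 1 := by positivity
      have key : ((H:ℝ) + i + (n+1)) * P (n+1) = ((i:ℝ) + n) * P n := by
        rw [hPrec n]
        push_cast
        field_simp
        ring
      rw [key]
      have hPb : P n ≤ ((H:ℝ) + i) * i / ((i:ℝ) + n) / ((H:ℝ) + i + n) := by
        have h4 : (0:ℝ) < (H:ℝ) + i + n := by positivity
        rw [le_div_iff₀ h4, mul_comm]
        exact ih
      calc ((i:ℝ) + n) * P n ≤ ((i:ℝ) + n) * (((H:ℝ) + i) * i / ((i:ℝ) + n) / ((H:ℝ) + i + n)) := by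
            apply mul_le_mul_of_nonneg_left hPb h1.le
        _ ≤ ((H:ℝ) + i) * i / ((i:ℝ) + (n+1)) := by
            rw [le_div_iff₀ (by positivity)]
            have hiH : (i:ℝ) + n + 1 ≤ (H:ℝ) + i + n := by linarith [hH0, (by exact_mod_cast hH : (1:ℝ) ≤ H)]
            have hnn : (0:ℝ) ≤ ((H:ℝ)+i)*i := by positivity
            push_cast
            calc ((i:ℝ) + n) * (((H:ℝ) + i) * i / ((i:ℝ) + n) / ((H:ℝ) + i + n)) * ((i:ℝ) + (n+1))
                = ((H:ℝ) + i) * i * (((i:ℝ)+n+1) / ((H:ℝ) + i + n)) := by field_simp; ring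
              _ ≤ ((H:ℝ) + i) * i * 1 := by
                  apply mul_le_mul_of_nonneg_left _ hnn
                  rw [div_le_one (by positivity)]
                  exact hiH
              _ = ((H:ℝ) + i) * i := by ring
  -- R n → 0
  have hRto0 : Tendsto (fun n : ℕ => ((H:ℝ) + i + n) * P n) atTop (nhds 0) := by
    apply squeeze_zero
    · intro n
      have : (0:ℝ) ≤ (H:ℝ) + i + n := by positivity
      exact mul_nonneg this (hPnn n)
    · exact hRbound
    · have : Tendsto (fun n : ℕ => ((i:ℝ) + n)) atTop atTop := by
        apply tendsto_atTop_add_const_left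
        exact tendsto_natCast_atTop_atTop
      simpa using Tendsto.div_atTop (tendsto_const_nhds : Tendsto (fun _ : ℕ => ((H:ℝ)+i)*i) atTop (nhds (((H:ℝ)+i)*i))) this
  -- f n = α i * P n
  have hf : ∀ n, w (i + n) i = α i * P n := fun n => hw (i+n) i
  have hfnn : ∀ n, 0 ≤ w (i + n) i := by
    intro n
    rw [hf n]
    apply mul_nonneg _ (hPnn n)
    rw [hα]
    positivity
  rw [hasSum_iff_tendsto_nat_of_nonneg hfnn]
  have heq : ∀ N, ∑ n ∈ range N, w (i + n) i = α i * ((((H:ℝ) + i) - ((H:ℝ) + i + N) * P N) / H) := by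
    intro N
    simp only [hf]
    rw [← Finset.mul_sum, hsum N]
  simp only [heq]
  have hαi : α i = ((H:ℝ)+1)/((H:ℝ)+i) := hα i
  have hlim : Tendsto (fun N : ℕ => α i * ((((H:ℝ) + i) - ((H:ℝ) + i + N) * P N) / H)) atTop
      (nhds (α i * ((((H:ℝ) + i) - 0) / H))) := by
    apply Tendsto.const_mul
    apply Tendsto.div_const
    exact (tendsto_const_nhds).sub hRto0
  convert hlim using 2
  rw [hαi]
  have hHi : (0:ℝ) < (H:ℝ) + i := by positivity
  rw [sub_zero]
  field_simp
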